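/- Let n ≥ 3 and let f: X → Y be an irreducible morphism in C_n(proj Λ). (i) If X^1 = 0 and Y^1 = 0, then *[f]: *[X] → *[Y] is an irreducible morphism in C_{n−1}(proj Λ). (ii) If X^n = 0 and Y^n = 0, then [f]_*: [X]_* → [Y]_* is an irreducible morphism in C_{n−1}(proj Λ). -/

import Mathlib

open CategoryTheory CategoryTheory.Limits ZeroObject

noncomputable section

namespace Paper

/-- The ambient category: cochain complexes of right `Λ`-modules indexed by `ℤ`. -/
abbrev Amb (Λ : Type) [Ring Λ] := CochainComplex (ModuleCat.{0} Λᵐᵒᵖ) ℤ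

variable {Λ : Type} [Ring Λ]

/-- All cells are finitely generated projective right `Λ`-modules. -/
def ProjCells (X : Amb Λ) : Prop :=
  ∀ i : ℤ, Module.Finite Λᵐᵒᵖ (X.X i) ∧ Module.Projective Λᵐᵒᵖ (X.X i)

/-- The complex is supported in the window `[a, b]`. -/
def Supp (a b : ℤ) (X : Amb Λ) : Prop :=
  ∀ i : ℤ, (i < a ∨ b < i) → IsZero (X.X i)

/-- Object of the category `C_{[a,b]}(proj Λ)` of complexes of finitely generated
projective modules concentrated in the window `[a, b]`.  (The category
`C_n(proj Λ)` of the paper corresponds to the window `[1, n]`; a window `[a, b]`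
corresponds to `C_{b-a+1}(proj Λ)` after the canonical reindexing.) -/
def InC (a b : ℤ) (X : Amb Λ) : Prop := Supp a b X ∧ ProjCells X

def IsSect {X Y : Amb Λ} (f : X ⟶ Y) : Prop := ∃ h : Y ⟶ X, f ≫ h = 𝟙 X

def IsRetr {X Y : Amb Λ} (f : X ⟶ Y) : Prop := ∃ h : Y ⟶ X, h ≫ f = 𝟙 Y

/-- `f` is irreducible in `C_{[a,b]}(proj Λ)`. -/
def Irred (a b : ℤ) {X Y : Amb Λ} (f : X ⟶ Y) : Prop :=
  ¬ IsSect f ∧ ¬ IsRetr f ∧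
    ∀ (W : Amb Λ), InC a b W → ∀ (g : X ⟶ W) (h : W ⟶ Y),
      g ≫ h = f → IsRetr h ∨ IsSect g

/-- Indecomposable complex. -/
def Indec (X : Amb Λ) : Prop :=
  ¬ IsZero X ∧ ∀ (A B : Amb Λ), (X ≅ A ⊞ B) → IsZero A ∨ IsZero B

/-- A conflation: in every degree a split short exact sequence. -/
def DegSplit {X Y Z : Amb Λ} (f : X ⟶ Y) (g : Y ⟶ Z) : Prop :=
  ∀ j : ℤ, ∃ w : f.f j ≫ g.f j = 0,
    Nonempty (ShortComplex.mk (f.f j) (g.f j) w).Splitting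

/-- Minimal left almost split morphism in `C_{[a,b]}(proj Λ)`. -/
def MinLeftAS (a b : ℤ) {X Y : Amb Λ} (f : X ⟶ Y) : Prop :=
  ¬ IsSect f ∧
    (∀ (W : Amb Λ), InC a b W → ∀ u : X ⟶ W, ¬ IsSect u → ∃ v : Y ⟶ W, f ≫ v = u) ∧
    (∀ u : Y ⟶ Y, f ≫ u = f → IsIso u)

/-- Minimal right almost split morphism in `C_{[a,b]}(proj Λ)`. -/
def MinRightAS (a b : ℤ) {Y Z : Amb Λ} (g : Y ⟶ Z) : Prop :=
  ¬ IsRetr g ∧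
    (∀ (W : Amb Λ), InC a b W → ∀ u : W ⟶ Z, ¬ IsRetr u → ∃ v : W ⟶ Y, v ≫ g = u) ∧
    (∀ u : Y ⟶ Y, u ≫ g = g → IsIso u)

/-- Almost split sequence in `C_{[a,b]}(proj Λ)`. -/
def AlmostSplit (a b : ℤ) {X Y Z : Amb Λ} (f : X ⟶ Y) (g : Y ⟶ Z) : Prop :=
  DegSplit f g ∧ MinLeftAS a b f ∧ MinRightAS a b g

/-- `X` (supported in a window starting at `a`) can be extended to the left. -/
def ExtLeft (a : ℤ) (X : Amb Λ) : Prop :=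
  ∃ P : ModuleCat.{0} Λᵐᵒᵖ, Module.Finite Λᵐᵒᵖ P ∧ Module.Projective Λᵐᵒᵖ P ∧
    ∃ δ : P ⟶ X.X a, δ ≠ 0 ∧ δ ≫ X.d a (a + 1) = 0

/-- `X` (supported in a window ending at `b`) can be extended to the right. -/
def ExtRight (b : ℤ) (X : Amb Λ) : Prop :=
  ∃ P : ModuleCat.{0} Λᵐᵒᵖ, Module.Finite Λᵐᵒᵖ P ∧ Module.Projective Λᵐᵒᵖ P ∧
    ∃ δ : X.X b ⟶ P, δ ≠ 0 ∧ X.d (b - 1) b ≫ δ = 0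

/-- Bounded complex. -/
def BddCplx (X : Amb Λ) : Prop := ∃ a b : ℤ, Supp a b X

/-- Contractible complex, i.e. zero in the homotopy category. -/
def Contractible (X : Amb Λ) : Prop := Nonempty (Homotopy (𝟙 X) 0)

/-- Indecomposable nonzero object of `K^b(proj Λ)`. -/
def HIndec (X : Amb Λ) : Prop :=
  ¬ Contractible X ∧
    ∀ (A B : Amb Λ), ProjCells A → BddCplx A → ProjCells B → BddCplx B →
      Nonempty (HomotopyEquiv X (A ⊞ B)) → Contractible A ∨ Contractible B

/-- The candidate lengths of `X` as an object of `K^b(proj Λ)`. -/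
def lenSet (X : Amb Λ) : Set ℕ :=
  {d | ∃ (Y : Amb Λ) (r s : ℤ), r ≤ s ∧ Nonempty (HomotopyEquiv X Y) ∧
        ProjCells Y ∧ Supp r s Y ∧ d = (s - r).toNat}

/-- `ℓ(X)`. -/
def len (X : Amb Λ) : ℕ := sInf (lenSet X)

/-- `η` is the strong global dimension of `Λ`. -/
def IsSGdim (Λ : Type) [Ring Λ] (η : ℕ) : Prop :=
  IsGreatest {d : ℕ | ∃ X : Amb Λ, ProjCells X ∧ BddCplx X ∧ HIndec X ∧ len X = d} η

/-- Brutal truncation of a complex to the set of degrees satisfying `P`. -/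
def chop (P : ℤ → Prop) [DecidablePred P] (X : Amb Λ) : Amb Λ where
  X i := if P i then X.X i else 0
  d i j :=
    if hi : P i then
      if hj : P j then
        eqToHom (if_pos hi) ≫ X.d i j ≫ eqToHom (if_pos hj).symm
      else 0
    else 0
  shape i j h := by
    by_cases hi : P i
    · by_cases hj : P j
      · simp [hi, hj, X.shape i j h]
      · simp [hi, hj]
    · simp [hi]
  d_comp_d' i j k hij hjk := by
    by_cases hi : P i <;> by_cases hj : P j <;> by_cases hk : P k <;>
      simp [hi, hj, hk]

/-- Brutal truncation of a chain map. -/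
def chopMap (P : ℤ → Prop) [DecidablePred P] {X Y : Amb Λ} (f : X ⟶ Y) :
    chop P X ⟶ chop P Y where
  f i :=
    if h : P i then eqToHom (if_pos h) ≫ f.f i ≫ eqToHom (if_pos h).symm
    else 0
  comm' i j hij := by
    by_cases hi : P i <;> by_cases hj : P j <;>
      simp [chop, hi, hj] <;> first | exact zero_comp.symm | exact zero_comp

/-- `E_{[a,b]}`-projective complex (lifting against proper epimorphisms). -/
def EProj (a b : ℤ) (P : Amb Λ) : Prop :=
  ∀ (W₁ W₂ : Amb Λ), InC a b W₁ → InC a b W₂ → ∀ v : W₁ ⟶ W₂,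
    (∀ j : ℤ, Epi (v.f j)) → ∀ f : P ⟶ W₂, ∃ g : P ⟶ W₁, g ≫ v = f

/-- `E_{[a,b]}`-injective complex (extending along proper monomorphisms). -/
def EInj (a b : ℤ) (I : Amb Λ) : Prop :=
  ∀ (W₁ W₂ : Amb Λ), InC a b W₁ → InC a b W₂ → ∀ v : W₁ ⟶ W₂,
    (∀ j : ℤ, Mono (v.f j)) → ∀ f : W₁ ⟶ I, ∃ g : W₂ ⟶ I, v ≫ g = f

lemma isZero_chop (P : ℤ → Prop) [DecidablePred P] (X : Amb Λ) {i : ℤ} (hi : ¬ P i) :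
    IsZero ((chop P X).X i) := by
  simp only [chop]; rw [if_neg hi]; exact isZero_zero _

/-- If all cells outside `P` are zero, `X` is isomorphic to its brutal truncation. -/
def chopIso (P : ℤ → Prop) [DecidablePred P] (X : Amb Λ)
    (hz : ∀ i, ¬ P i → IsZero (X.X i)) : X ≅ chop P X :=
  HomologicalComplex.Hom.isoOfComponents
    (fun i =>
      if h : P i then eqToIso (if_pos h).symm
      else (hz i h).iso (isZero_chop P X h))
    (by
      intro i j _
      by_cases hi : P i
      · by_cases hj : P j
        · simp [chop, hi, hj]
        · exact (isZero_chop P X hj).eq_of_tgt _ _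
      · exact (hz i hi).eq_of_src _ _)

lemma chopMap_eq (P : ℤ → Prop) [DecidablePred P] {X Y : Amb Λ} (f : X ⟶ Y)
    (hzX : ∀ i, ¬ P i → IsZero (X.X i)) (hzY : ∀ i, ¬ P i → IsZero (Y.X i)) :
    chopMap P f = (chopIso P X hzX).inv ≫ f ≫ (chopIso P Y hzY).hom := by
  apply HomologicalComplex.hom_ext
  intro i
  by_cases hi : P i
  · simp [chopMap, chopIso, hi]
    rfl
  · exact (isZero_chop P X hi).eq_of_src _ _

lemma isSect_iso_comp {A B C : Amb Λ} (e : A ≅ B) (f : B ⟶ C) :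
    IsSect (e.hom ≫ f) ↔ IsSect f := by
  constructor
  · rintro ⟨h, hh⟩
    exact ⟨h ≫ e.hom, by rw [← Category.assoc, ← cancel_epi e.hom, ← Category.assoc,
      ← Category.assoc, hh]; simp⟩
  · rintro ⟨h, hh⟩
    exact ⟨h ≫ e.inv, by simp [Category.assoc, reassoc_of% hh, hh]⟩

lemma isSect_comp_iso {A B C : Amb Λ} (f : A ⟶ B) (e : B ≅ C) :
    IsSect (f ≫ e.hom) ↔ IsSect f := by
  constructor
  · rintro ⟨h, hh⟩; exact ⟨e.hom ≫ h, by rw [← Category.assoc]; exact hh⟩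
  · rintro ⟨h, hh⟩; exact ⟨e.inv ≫ h, by simp [hh]⟩

lemma isRetr_iso_comp {A B C : Amb Λ} (e : A ≅ B) (f : B ⟶ C) :
    IsRetr (e.hom ≫ f) ↔ IsRetr f := by
  constructor
  · rintro ⟨h, hh⟩; exact ⟨h ≫ e.hom, by simpa using hh⟩
  · rintro ⟨h, hh⟩; exact ⟨h ≫ e.inv, by simp [hh]⟩

lemma isRetr_comp_iso {A B C : Amb Λ} (f : A ⟶ B) (e : B ≅ C) :
    IsRetr (f ≫ e.hom) ↔ IsRetr f := by
  constructor
  · rintro ⟨h, hh⟩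
    refine ⟨e.hom ≫ h, ?_⟩
    rw [← cancel_mono e.hom]
    simpa [Category.assoc] using congrArg (fun g => e.hom ≫ g) hh
  · rintro ⟨h, hh⟩; exact ⟨e.inv ≫ h, by simp [reassoc_of% hh, hh]⟩

/-- Transfer of irreducibility along isomorphisms, with a possibly different window. -/
lemma irred_transfer (a b a' b' : ℤ) {X Y X' Y' : Amb Λ} (f : X ⟶ Y)
    (eX : X ≅ X') (eY : Y ≅ Y') (hf : Irred a b f)
    (hwin : ∀ W : Amb Λ, InC a' b' W → InC a b W) :
    Irred a' b' (eX.inv ≫ f ≫ eY.hom) := by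
  obtain ⟨hs, hr, hfac⟩ := hf
  refine ⟨?_, ?_, ?_⟩
  · intro h
    exact hs ((isSect_comp_iso f eY).mp ((isSect_iso_comp eX.symm _).mp h))
  · intro h
    exact hr ((isRetr_comp_iso f eY).mp ((isRetr_iso_comp eX.symm _).mp h))
  · intro W hW g h hgh
    have : (eX.hom ≫ g) ≫ (h ≫ eY.inv) = f := by
      rw [← cancel_epi eX.inv, ← cancel_mono eY.hom]
      simpa [Category.assoc] using hgh
    rcases hfac W (hwin W hW) _ _ this with h1 | h1
    · exact Or.inl ((isRetr_comp_iso h eY.symm).mp h1)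
    · exact Or.inr ((isSect_iso_comp eX g).mp h1)
theorem statement0 (K : Type) [Field K] [IsAlgClosed K]
    (Λ : Type) [Ring Λ] [Algebra K Λ] [FiniteDimensional K Λ]
    (n : ℤ) (hn : 3 ≤ n) (X Y : Amb Λ) (hX : InC 1 n X) (hY : InC 1 n Y)
    (f : X ⟶ Y) (hf : Irred 1 n f) :
    (IsZero (X.X 1) → IsZero (Y.X 1) →
      Irred 2 n (chopMap (fun i => 2 ≤ i) f)) ∧
    (IsZero (X.X n) → IsZero (Y.X n) →
      Irred 1 (n - 1) (chopMap (fun i => i ≤ n - 1) f)) := by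
  constructor
  · intro hX1 hY1
    have hzX : ∀ i, ¬ (2 ≤ i) → IsZero (X.X i) := by
      intro i hi
      rcases eq_or_lt_of_le (by omega : i ≤ 1) with h | h
      · exact h ▸ hX1
      · exact hX.1 i (Or.inl h)
    have hzY : ∀ i, ¬ (2 ≤ i) → IsZero (Y.X i) := by
      intro i hi
      rcases eq_or_lt_of_le (by omega : i ≤ 1) with h | h
      · exact h ▸ hY1
      · exact hY.1 i (Or.inl h)
    rw [chopMap_eq _ f hzX hzY]
    exact irred_transfer 1 n 2 n f _ _ hf
      (fun W hW => ⟨fun i hi => hW.1 i (by omega), hW.2⟩)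
  · intro hXn hYn
    have hzX : ∀ i, ¬ (i ≤ n - 1) → IsZero (X.X i) := by
      intro i hi
      rcases eq_or_lt_of_le (by omega : n ≤ i) with h | h
      · exact h ▸ hXn
      · exact hX.1 i (Or.inr h)
    have hzY : ∀ i, ¬ (i ≤ n - 1) → IsZero (Y.X i) := by
      intro i hi
      rcases eq_or_lt_of_le (by omega : n ≤ i) with h | h
      · exact h ▸ hYn
      · exact hY.1 i (Or.inr h)
    rw [chopMap_eq _ f hzX hzY]
    exact irred_transfer 1 n 1 (n - 1) f _ _ hf
      (fun W hW => ⟨fun i hi => hW.1 i (by omega), hW.2⟩)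

end Paper
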